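/- Let ℤ_(2) denote the localization of ℤ at the prime 2 (the subring of ℚ of fractions with odd denominator) and let Λ be a free ℤ_(2)-module of finite rank. For every ψ' ∈ Λ, the image of the coset ψ' + 2Λ under the natural map Λ → Λ ⊗_{ℤ_(2)} ℝ is dense in the real vector space Λ ⊗_{ℤ_(2)} ℝ. Consequently, for every nonempty open subset U of Λ ⊗_{ℤ_(2)} ℝ there exists ψ ∈ Λ with ψ − ψ' ∈ 2Λ whose image lies in U. -/

import Mathlib

/-- Rationals with odd denominator approximate any real. -/
lemma exists_odd_den_close (y : ℝ) {ε : ℝ} (hε : 0 < ε) :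
    ∃ q : ℚ, Odd q.den ∧ |(q : ℝ) - y| < ε := by
  obtain ⟨k, hk⟩ := exists_pow_lt_of_lt_one hε (by norm_num : (1 : ℝ) / 3 < 1)
  set q : ℚ := (⌊y * 3 ^ k⌋ : ℚ) / 3 ^ k with hq
  have h3k : (0 : ℝ) < 3 ^ k := by positivity
  refine ⟨q, ?_, ?_⟩
  · have hdvd : ((q.den : ℤ)) ∣ (3 ^ k : ℤ) := by
      have := Rat.den_dvd (⌊y * 3 ^ k⌋) (3 ^ k)
      simpa [hq, Rat.divInt_eq_div] using this
    have hdvd' : q.den ∣ 3 ^ k := by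
      have := Int.natAbs_dvd_natAbs.mpr hdvd
      simpa [Int.natAbs_pow] using this
    exact Odd.of_dvd_nat (Odd.pow (by decide)) hdvd'
  · have hqy : (q : ℝ) = (⌊y * 3 ^ k⌋ : ℝ) / 3 ^ k := by rw [hq]; push_cast; ring
    have hfl : |(⌊y * 3 ^ k⌋ : ℝ) - y * 3 ^ k| < 1 := by
      rw [abs_sub_lt_iff]
      constructor
      · linarith [Int.floor_le (y * 3 ^ k)]
      · linarith [Int.sub_one_lt_floor (y * 3 ^ k)]
    have heq : |(q : ℝ) - y| = |(⌊y * 3 ^ k⌋ : ℝ) - y * 3 ^ k| / 3 ^ k := by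
      rw [hqy, ← abs_of_pos h3k, ← abs_div]
      congr 1
      field_simp
      rw [abs_of_pos h3k]
    have hlt : |(⌊y * 3 ^ k⌋ : ℝ) - y * 3 ^ k| / 3 ^ k < 1 / 3 ^ k :=
      (div_lt_div_iff_of_pos_right h3k).mpr hfl
    have h13 : (1 : ℝ) / 3 ^ k = (1 / 3) ^ k := by rw [div_pow, one_pow]
    rw [heq]
    calc _ < 1 / 3 ^ k := hlt
      _ ≤ ε := by rw [h13]; exact hk.le

theorem dense_coset_two_localization (d : ℕ) (ψ' : Fin d → ℚ)
    (hψ' : ∀ i, Odd (ψ' i).den) :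
    Dense {v : Fin d → ℝ | ∃ lam : Fin d → ℚ,
        (∀ i, Odd (lam i).den) ∧ ∀ i, v i = ((ψ' i + 2 * lam i : ℚ) : ℝ)} ∧
    ∀ U : Set (Fin d → ℝ), IsOpen U → U.Nonempty →
      ∃ lam : Fin d → ℚ, (∀ i, Odd (lam i).den) ∧
        (fun i => ((ψ' i + 2 * lam i : ℚ) : ℝ)) ∈ U := by
  have hD : Dense {v : Fin d → ℝ | ∃ lam : Fin d → ℚ,
      (∀ i, Odd (lam i).den) ∧ ∀ i, v i = ((ψ' i + 2 * lam i : ℚ) : ℝ)} := by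
    rw [Metric.dense_iff]
    intro v ε hε
    have key : ∀ i : Fin d, ∃ q : ℚ, Odd q.den ∧
        |(((ψ' i + 2 * q : ℚ) : ℝ)) - v i| < ε := by
      intro i
      obtain ⟨q, hq1, hq2⟩ := exists_odd_den_close ((v i - (ψ' i : ℝ)) / 2)
        (by positivity : (0 : ℝ) < ε / 2)
      refine ⟨q, hq1, ?_⟩
      push_cast
      have : (ψ' i : ℝ) + 2 * q - v i = 2 * ((q : ℝ) - (v i - (ψ' i : ℝ)) / 2) := by ring
      rw [this, abs_mul, abs_two]
      linarith
    choose lam hlam1 hlam2 using key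
    refine ⟨fun i => ((ψ' i + 2 * lam i : ℚ) : ℝ), ?_, ⟨lam, hlam1, fun i => rfl⟩⟩
    rw [Metric.mem_ball, dist_pi_lt_iff hε]
    intro i
    rw [Real.dist_eq]
    exact hlam2 i
  refine ⟨hD, fun U hU hUne => ?_⟩
  obtain ⟨v, hvS, hvU⟩ := hD.exists_mem_open hU hUne
  obtain ⟨lam, h1, h2⟩ := hvS
  refine ⟨lam, h1, ?_⟩
  have : (fun i => ((ψ' i + 2 * lam i : ℚ) : ℝ)) = v := by
    funext i; exact (h2 i).symm
  rw [this]; exact hvU
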